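/- Let S be a pseudo-regular subspace of a Krein space (H,J), with isotropic part S°. If M₁ and M₂ are regular subspaces such that S = M₁ [∔] S° = M₂ [∔] S°, then the restriction to M₁ of the projection P_{M₂ // S°} (the projection in L(S) with range M₂ and nullspace S°) is a bounded J-isometric isomorphism from M₁ onto M₂, i.e., it is bijective and satisfies [Wf, Wg] = [f, g] for all f, g ∈ M₁. -/

import Mathlib

open ContinuousLinearMap

variable {H : Type*} [NormedAddCommGroup H] [InnerProductSpace ℂ H] [CompleteSpace H]

/-- The `J`-adjoint `T^# = J T* J`. -/
noncomputable def sharp (J T : H →L[ℂ] H) : H →L[ℂ] H :=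
  J ∘L (ContinuousLinearMap.adjoint T) ∘L J

/-- The `J`-orthogonal companion `S^{[⊥]} = {f : [g,f] = 0 ∀ g ∈ S}` where `[g,f] = ⟪J g, f⟫`. -/
def jperp (J : H →L[ℂ] H) (S : Submodule ℂ H) : Submodule ℂ H where
  carrier := {f | ∀ g ∈ S, (inner ℂ (J g) f : ℂ) = 0}
  add_mem' := by
    intro a b ha hb g hg
    rw [inner_add_right, ha g hg, hb g hg, add_zero]
  zero_mem' := by
    intro g hg
    simp
  smul_mem' := by
    intro c a ha g hg
    rw [inner_smul_right, ha g hg, mul_zero]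

/-- A (closed) subspace `M` is regular if `M [∔] M^{[⊥]} = H`. -/
def KreinRegular (J : H →L[ℂ] H) (M : Submodule ℂ H) : Prop :=
  IsClosed (M : Set H) ∧ M ⊔ jperp J M = ⊤ ∧ M ⊓ jperp J M = ⊥

/-- A closed subspace `S` is pseudo-regular if `S = M [∔] S°` for some regular subspace `M`,
where `S° = S ⊓ S^{[⊥]}` is the isotropic part. -/
def KreinPseudoRegular (J : H →L[ℂ] H) (S : Submodule ℂ H) : Prop :=
  IsClosed (S : Set H) ∧ ∃ M : Submodule ℂ H, KreinRegular J M ∧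
    M ⊔ (S ⊓ jperp J S) = S ∧ M ⊓ (S ⊓ jperp J S) = ⊥

/-- If `S = M₁ [∔] S° = M₂ [∔] S°` with `M₁, M₂` regular, then the projection with range `M₂`
and nullspace `S°` restricts to a `J`-isometric isomorphism from `M₁` onto `M₂`. -/
theorem stmt10 (J : H →L[ℂ] H)
    (hJsa : ContinuousLinearMap.adjoint J = J) (hJ2 : J ∘L J = 1)
    (S M₁ M₂ : Submodule ℂ H) (hSc : IsClosed (S : Set H))
    (hM₁ : KreinRegular J M₁) (hM₂ : KreinRegular J M₂)
    (h₁sup : M₁ ⊔ (S ⊓ jperp J S) = S) (h₁inf : M₁ ⊓ (S ⊓ jperp J S) = ⊥)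
    (h₂sup : M₂ ⊔ (S ⊓ jperp J S) = S) (h₂inf : M₂ ⊓ (S ⊓ jperp J S) = ⊥)
    (E : H →L[ℂ] H)
    (hEfix : ∀ x ∈ M₂, E x = x) (hEker : ∀ x ∈ S ⊓ jperp J S, E x = 0) :
    Set.BijOn (fun x => E x) (M₁ : Set H) (M₂ : Set H) ∧
    ∀ f ∈ M₁, ∀ g ∈ M₁, (inner ℂ (J (E f)) (E g) : ℂ) = inner ℂ (J f) g := by

  have hS1 : M₁ ≤ S := h₁sup ▸ le_sup_left
  have hS2 : M₂ ≤ S := h₂sup ▸ le_sup_left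
  have hS0 : (S ⊓ jperp J S) ≤ S := inf_le_left
  have hdec : ∀ f ∈ M₁, E f ∈ M₂ ∧ f - E f ∈ S ⊓ jperp J S := by
    intro f hf
    have hfS : f ∈ M₂ ⊔ (S ⊓ jperp J S) := by rw [h₂sup]; exact hS1 hf
    rcases Submodule.mem_sup.mp hfS with ⟨m, hm, n, hn, hmn⟩
    have hEf : E f = m := by
      rw [← hmn, map_add, hEfix m hm, hEker n hn, add_zero]
    refine ⟨hEf ▸ hm, ?_⟩
    rw [hEf, ← hmn]
    simpa using hn
  have hzero : ∀ x ∈ S ⊓ jperp J S, ∀ y ∈ S,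
      (inner ℂ (J x) y : ℂ) = 0 ∧ (inner ℂ (J y) x : ℂ) = 0 := by
    intro x hx y hy
    have h1 : (inner ℂ (J y) x : ℂ) = 0 := hx.2 y hy
    refine ⟨?_, h1⟩
    have hsym : (inner ℂ (J x) y : ℂ) = inner ℂ x (J y) := by
      conv_lhs => rw [← hJsa]
      exact ContinuousLinearMap.adjoint_inner_left J y x
    rw [hsym, ← inner_conj_symm, h1, map_zero]
  constructor
  · refine ⟨fun f hf => (hdec f hf).1, ?_, ?_⟩
    · intro f hf g hg hEq
      have hsub : f - g ∈ M₁ ⊓ (S ⊓ jperp J S) := by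
        constructor
        · exact Submodule.sub_mem _ hf hg
        · have : f - g = (f - E f) - (g - E g) := by
            simp only at hEq
            rw [hEq]; abel
          rw [this]
          exact Submodule.sub_mem _ (hdec f hf).2 (hdec g hg).2
      rw [h₁inf] at hsub
      exact sub_eq_zero.mp ((Submodule.mem_bot ℂ).mp hsub)
    · intro m hm
      have hmS : m ∈ M₁ ⊔ (S ⊓ jperp J S) := by rw [h₁sup]; exact hS2 hm
      rcases Submodule.mem_sup.mp hmS with ⟨m₁, hm₁, n, hn, hmn⟩
      refine ⟨m₁, hm₁, ?_⟩
      have : m₁ = m - n := by rw [← hmn]; abel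
      simp only [this, map_sub, hEfix m hm, hEker n hn, sub_zero]
  · intro f hf g hg
    obtain ⟨hEfM, hnf⟩ := hdec f hf
    obtain ⟨hEgM, hng⟩ := hdec g hg
    have h1 : (inner ℂ (J (E f)) (g - E g) : ℂ) = 0 :=
      (hzero (g - E g) hng (E f) (hS2 hEfM)).2
    have h2 : (inner ℂ (J (f - E f)) (E g) : ℂ) = 0 :=
      (hzero (f - E f) hnf (E g) (hS2 hEgM)).1
    have h3 : (inner ℂ (J (f - E f)) (g - E g) : ℂ) = 0 :=
      (hzero (f - E f) hnf (g - E g) (hS0 hng)).1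
    have hf' : f = E f + (f - E f) := by abel
    have hg' : g = E g + (g - E g) := by abel
    conv_rhs => rw [hf', hg']
    rw [map_add, inner_add_left, inner_add_right, inner_add_right, h1, h2, h3]
    ring
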